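/- Let z₀ ∈ ℂ \ {0} and κ₁ ∈ ℂ, and set κ₂ = −(z₀⁶ − 15κ₁z₀³ − 45κ₁²)/(45z₀) and κ₃ = −(z₀⁹ − 189κ₁²z₀³ − 189κ₁³)/(189z₀²). Then z₀ is a root of multiplicity at least 3 of the Adler–Moser polynomial Θ₄(z) with parameters (κ₁,κ₂,κ₃): Θ₄(z₀) = 0, Θ₄′(z₀) = 0 and Θ₄″(z₀) = 0. -/

import Mathlib

open Complex

/-- The Adler–Moser polynomial
`Θ₄(z) = z¹⁰ − 45κ₁z⁷ + 315κ₂z⁵ − 1575κ₃z³ + 4725κ₁κ₂z² − 4725κ₁³z − 4725κ₂² + 4725κ₁κ₃`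
as a function of `z`. -/
noncomputable def theta4 (κ₁ κ₂ κ₃ : ℂ) : ℂ → ℂ := fun z =>
  z ^ 10 - 45 * κ₁ * z ^ 7 + 315 * κ₂ * z ^ 5 - 1575 * κ₃ * z ^ 3
    + 4725 * κ₁ * κ₂ * z ^ 2 - 4725 * κ₁ ^ 3 * z - 4725 * κ₂ ^ 2 + 4725 * κ₁ * κ₃

lemma hasDerivAt_theta4 (κ₁ κ₂ κ₃ z : ℂ) :
    HasDerivAt (theta4 κ₁ κ₂ κ₃)
      (10 * z ^ 9 - 315 * κ₁ * z ^ 6 + 1575 * κ₂ * z ^ 4 - 4725 * κ₃ * z ^ 2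
        + 9450 * κ₁ * κ₂ * z - 4725 * κ₁ ^ 3) z := by
  have h := ((((((((hasDerivAt_pow 10 z).sub
    ((hasDerivAt_pow 7 z).const_mul (45 * κ₁))).add
    ((hasDerivAt_pow 5 z).const_mul (315 * κ₂))).sub
    ((hasDerivAt_pow 3 z).const_mul (1575 * κ₃))).add
    ((hasDerivAt_pow 2 z).const_mul (4725 * κ₁ * κ₂))).sub
    ((hasDerivAt_pow 1 z).const_mul (4725 * κ₁ ^ 3))).sub
    (hasDerivAt_const z (4725 * κ₂ ^ 2))).add
    (hasDerivAt_const z (4725 * κ₁ * κ₃)))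
  convert h using 1
  · rfl
  · rfl
  · funext w; simp only [theta4, Pi.add_apply, Pi.sub_apply]; ring
  · push_cast; ring

lemma deriv_theta4 (κ₁ κ₂ κ₃ : ℂ) :
    deriv (theta4 κ₁ κ₂ κ₃) = fun z =>
      10 * z ^ 9 - 315 * κ₁ * z ^ 6 + 1575 * κ₂ * z ^ 4 - 4725 * κ₃ * z ^ 2
        + 9450 * κ₁ * κ₂ * z - 4725 * κ₁ ^ 3 := by
  funext z; exact (hasDerivAt_theta4 κ₁ κ₂ κ₃ z).deriv

lemma deriv2_theta4 (κ₁ κ₂ κ₃ z : ℂ) :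
    deriv (deriv (theta4 κ₁ κ₂ κ₃)) z =
      90 * z ^ 8 - 1890 * κ₁ * z ^ 5 + 6300 * κ₂ * z ^ 3 - 9450 * κ₃ * z
        + 9450 * κ₁ * κ₂ := by
  rw [deriv_theta4]
  have h := ((((((hasDerivAt_pow 9 z).const_mul (10 : ℂ)).sub
    ((hasDerivAt_pow 6 z).const_mul (315 * κ₁))).add
    ((hasDerivAt_pow 4 z).const_mul (1575 * κ₂))).sub
    ((hasDerivAt_pow 2 z).const_mul (4725 * κ₃))).add
    ((hasDerivAt_pow 1 z).const_mul (9450 * κ₁ * κ₂))).sub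
    (hasDerivAt_const z (4725 * κ₁ ^ 3))
  have h2 : HasDerivAt (fun z : ℂ =>
      10 * z ^ 9 - 315 * κ₁ * z ^ 6 + 1575 * κ₂ * z ^ 4 - 4725 * κ₃ * z ^ 2
        + 9450 * κ₁ * κ₂ * z - 4725 * κ₁ ^ 3)
      (90 * z ^ 8 - 1890 * κ₁ * z ^ 5 + 6300 * κ₂ * z ^ 3 - 9450 * κ₃ * z
        + 9450 * κ₁ * κ₂) z := by
    convert h using 1
    · rfl
    · rfl
    · funext w; simp only [Pi.add_apply, Pi.sub_apply]; ring_nf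
    · push_cast; ring
  exact h2.deriv

set_option maxHeartbeats 1000000 in
theorem theta4_triple_root (z₀ : ℂ) (hz₀ : z₀ ≠ 0) (κ₁ κ₂ κ₃ : ℂ)
    (hκ₂ : κ₂ = -(z₀ ^ 6 - 15 * κ₁ * z₀ ^ 3 - 45 * κ₁ ^ 2) / (45 * z₀))
    (hκ₃ : κ₃ = -(z₀ ^ 9 - 189 * κ₁ ^ 2 * z₀ ^ 3 - 189 * κ₁ ^ 3) / (189 * z₀ ^ 2)) :
    theta4 κ₁ κ₂ κ₃ z₀ = 0 ∧ deriv (theta4 κ₁ κ₂ κ₃) z₀ = 0 ∧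
      iteratedDeriv 2 (theta4 κ₁ κ₂ κ₃) z₀ = 0 := by
  subst hκ₂ hκ₃
  have h2 : (45 : ℂ) * z₀ ≠ 0 := by simp [hz₀]
  have h3 : (189 : ℂ) * z₀ ^ 2 ≠ 0 := by simp [hz₀]
  refine ⟨?_, ?_, ?_⟩
  · simp only [theta4]; field_simp; ring_nf
  · rw [deriv_theta4]; field_simp; ring_nf
  · rw [iteratedDeriv_succ, iteratedDeriv_one, deriv2_theta4]; field_simp; ring_nf
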